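/- Let h_m be the (2m+1)-dimensional Heisenberg Lie algebra with m > 1, with basis x₁,y₁,…,x_m,y_m,z and brackets [x_i,y_i] = z. Then the bilinear map μ_t = μ + t(x₁* ∧ x₂* ⊗ y₁) is a Lie bracket for all t, and for t ≠ 0 it is 3-step nilpotent (hence not isomorphic to h_m). -/

import Mathlib

/-- For the (2m+1)-dimensional Heisenberg Lie algebra h_m with m > 1 (basis
x_i = inl i, y_i = inr (inl i), z = inr (inr ())), the map
μ_t = μ + t(x₁* ∧ x₂* ⊗ y₁) is a Lie bracket for all t, and for t ≠ 0 it is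
3-step nilpotent. -/
theorem heisenberg_three_step_deformation (K V : Type*) [Field K] [CharZero K]
    [AddCommGroup V] [Module K V]
    (m : ℕ) (hm : 1 < m)
    (b : Module.Basis (Fin m ⊕ (Fin m ⊕ Unit)) K V)
    (μ : V →ₗ[K] V →ₗ[K] V)
    (hμa : ∀ u v : V, μ u v = - μ v u)
    (hxy : ∀ i : Fin m, μ (b (Sum.inl i)) (b (Sum.inr (Sum.inl i))) = b (Sum.inr (Sum.inr ())))
    (hxy' : ∀ i j : Fin m, i ≠ j → μ (b (Sum.inl i)) (b (Sum.inr (Sum.inl j))) = 0)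
    (hxx : ∀ i j : Fin m, μ (b (Sum.inl i)) (b (Sum.inl j)) = 0)
    (hyy : ∀ i j : Fin m, μ (b (Sum.inr (Sum.inl i))) (b (Sum.inr (Sum.inl j))) = 0)
    (hz : ∀ v : V, μ (b (Sum.inr (Sum.inr ()))) v = 0)
    (t : K) :
    letI c₁ : V →ₗ[K] K := b.coord (Sum.inl ⟨0, by omega⟩)
    letI c₂ : V →ₗ[K] K := b.coord (Sum.inl ⟨1, by omega⟩)
    letI y₁ : V := b (Sum.inr (Sum.inl ⟨0, by omega⟩))
    letI μt : V → V → V := fun u v => μ u v + t • ((c₁ u * c₂ v - c₂ u * c₁ v) • y₁)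
    (∀ u v : V, μt u v = - μt v u) ∧
    (∀ u v w : V, μt (μt u v) w + μt (μt v w) u + μt (μt w u) v = 0) ∧
    (t ≠ 0 →
      (∀ x₁ x₂ x₃ x₄ : V, μt (μt (μt x₁ x₂) x₃) x₄ = 0) ∧
      (∃ u v w : V, μt (μt u v) w ≠ 0)) := by
  set c₁ : V →ₗ[K] K := b.coord (Sum.inl ⟨0, by omega⟩) with hc₁def
  set c₂ : V →ₗ[K] K := b.coord (Sum.inl ⟨1, by omega⟩) with hc₂def
  set y₁ : V := b (Sum.inr (Sum.inl ⟨0, by omega⟩)) with hy₁def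
  set μt : V → V → V := fun u v => μ u v + t • ((c₁ u * c₂ v - c₂ u * c₁ v) • y₁) with hμtdef
  set z : V := b (Sum.inr (Sum.inr ())) with hzdef
  -- coordinate facts
  have hc₁z : c₁ z = 0 := by simp [hc₁def, hzdef, Module.Basis.coord_apply, Module.Basis.repr_self, Finsupp.single_apply]
  have hc₂z : c₂ z = 0 := by simp [hc₂def, hzdef, Module.Basis.coord_apply, Module.Basis.repr_self, Finsupp.single_apply]
  have hc₁y : c₁ y₁ = 0 := by simp [hc₁def, hy₁def, Module.Basis.coord_apply, Module.Basis.repr_self, Finsupp.single_apply]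
  have hc₂y : c₂ y₁ = 0 := by simp [hc₂def, hy₁def, Module.Basis.coord_apply, Module.Basis.repr_self, Finsupp.single_apply]
  -- brackets of basis vectors lie in span {z}
  have hbb : ∀ i j, μ (b i) (b j) ∈ Submodule.span K {z} := by
    rintro (i | j | _) (i' | j' | _)
    · rw [hxx]; exact Submodule.zero_mem _
    · by_cases h : i = j'
      · subst h; rw [hxy]; exact Submodule.mem_span_singleton_self z
      · rw [hxy' _ _ h]; exact Submodule.zero_mem _
    · rw [hμa, hz]; simpa using Submodule.zero_mem _
    · rw [hμa]
      by_cases h : i' = j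
      · subst h; rw [hxy]
        exact Submodule.neg_mem _ (Submodule.mem_span_singleton_self z)
      · rw [hxy' _ _ h]; simpa using Submodule.zero_mem _
    · rw [hyy]; exact Submodule.zero_mem _
    · rw [hμa, hz]; simpa using Submodule.zero_mem _
    · rw [hz]; exact Submodule.zero_mem _
    · rw [hz]; exact Submodule.zero_mem _
    · rw [hz]; exact Submodule.zero_mem _
  have hmem : ∀ u v : V, μ u v ∈ Submodule.span K {z} := by
    intro u v
    rw [← b.sum_repr u, ← b.sum_repr v]
    simp only [map_sum, map_smul, LinearMap.sum_apply, LinearMap.smul_apply]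
    exact Submodule.sum_mem _ fun i _ => Submodule.smul_mem _ _ <|
      Submodule.sum_mem _ fun j _ => Submodule.smul_mem _ _ (hbb j i)
  have hrep : ∀ u v : V, ∃ a : K, μ u v = a • z := fun u v => by
    obtain ⟨a, ha⟩ := Submodule.mem_span_singleton.mp (hmem u v)
    exact ⟨a, ha.symm⟩
  have hμμ : ∀ u v w : V, μ (μ u v) w = 0 := by
    intro u v w
    obtain ⟨a, ha⟩ := hrep u v
    rw [ha, map_smul, LinearMap.smul_apply, hz, smul_zero]
  have hc₁μ : ∀ u v : V, c₁ (μ u v) = 0 := by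
    intro u v; obtain ⟨a, ha⟩ := hrep u v; rw [ha, map_smul, hc₁z, smul_zero]
  have hc₂μ : ∀ u v : V, c₂ (μ u v) = 0 := by
    intro u v; obtain ⟨a, ha⟩ := hrep u v; rw [ha, map_smul, hc₂z, smul_zero]
  -- μ w y₁ = c₁ w • z
  have hμy : ∀ w : V, μ w y₁ = c₁ w • z := by
    have h : μ.flip y₁ = LinearMap.smulRight c₁ z := by
      apply b.ext
      rintro (i | j | _)
      · by_cases h : i = (⟨0, by omega⟩ : Fin m)
        · subst h
          simp [LinearMap.flip_apply, hy₁def, hxy, hc₁def, Module.Basis.coord_apply,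
            Module.Basis.repr_self, Finsupp.single_apply]
        · have : μ (b (Sum.inl i)) y₁ = 0 := hxy' _ _ h
          simp [LinearMap.flip_apply, this, hc₁def, Module.Basis.coord_apply,
            Module.Basis.repr_self, Finsupp.single_apply, h, Ne.symm h]
      · have : μ (b (Sum.inr (Sum.inl j))) y₁ = 0 := hyy _ _
        simp [LinearMap.flip_apply, this, hc₁def, Module.Basis.coord_apply,
          Module.Basis.repr_self, Finsupp.single_apply]
      · simp only [LinearMap.flip_apply, LinearMap.smulRight_apply, ← hzdef, hz, hc₁z,
          zero_smul]
    intro w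
    have := LinearMap.congr_fun h w
    simpa using this
  have hyw : ∀ w : V, μ y₁ w = -(c₁ w • z) := by
    intro w; rw [hμa, hμy]
  -- the key computation: μt (μt u v) w
  have hkey : ∀ u v w : V,
      μt (μt u v) w = -((t * (c₁ u * c₂ v - c₂ u * c₁ v) * c₁ w) • z) := by
    intro u v w
    have e1 : c₁ (μt u v) = 0 := by
      simp only [hμtdef, map_add, map_smul, hc₁μ, hc₁y, smul_eq_mul, mul_zero, add_zero, zero_add,
        smul_zero]
    have e2 : c₂ (μt u v) = 0 := by
      simp only [hμtdef, map_add, map_smul, hc₂μ, hc₂y, smul_eq_mul, mul_zero, add_zero, zero_add,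
        smul_zero]
    calc μt (μt u v) w
        = μ (μt u v) w + t • ((c₁ (μt u v) * c₂ w - c₂ (μt u v) * c₁ w) • y₁) := rfl
      _ = μ (μt u v) w := by rw [e1, e2]; simp
      _ = μ (μ u v) w + t • ((c₁ u * c₂ v - c₂ u * c₁ v) • μ y₁ w) := by
          simp only [hμtdef, map_add, map_smul, LinearMap.add_apply, LinearMap.smul_apply]
      _ = -((t * (c₁ u * c₂ v - c₂ u * c₁ v) * c₁ w) • z) := by
          rw [hμμ, hyw]
          simp only [smul_neg, smul_smul, zero_add]
          ring_nf
  refine ⟨?_, ?_, ?_⟩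
  · intro u v
    have hs : (c₁ u * c₂ v - c₂ u * c₁ v) = -(c₁ v * c₂ u - c₂ v * c₁ u) := by ring
    show μ u v + t • ((c₁ u * c₂ v - c₂ u * c₁ v) • y₁)
        = -(μ v u + t • ((c₁ v * c₂ u - c₂ v * c₁ u) • y₁))
    rw [hμa u v, hs]
    module
  · intro u v w
    rw [hkey u v w, hkey v w u, hkey w u v]
    have hs : t * (c₁ u * c₂ v - c₂ u * c₁ v) * c₁ w
        + t * (c₁ v * c₂ w - c₂ v * c₁ w) * c₁ u
        + t * (c₁ w * c₂ u - c₂ w * c₁ u) * c₁ v = 0 := by ring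
    rw [← neg_smul, ← neg_smul, ← neg_smul, ← add_smul, ← add_smul]
    rw [show -(t * (c₁ u * c₂ v - c₂ u * c₁ v) * c₁ w)
        + -(t * (c₁ v * c₂ w - c₂ v * c₁ w) * c₁ u)
        + -(t * (c₁ w * c₂ u - c₂ w * c₁ u) * c₁ v) = 0 by linear_combination -hs]
    exact zero_smul K z
  · intro ht
    constructor
    · intro x₁ x₂ x₃ x₄
      rw [hkey x₁ x₂ x₃]
      have e1 : c₁ (-((t * (c₁ x₁ * c₂ x₂ - c₂ x₁ * c₁ x₂) * c₁ x₃)) • z) = 0 := by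
        rw [map_smul, hc₁z, smul_zero]
      show μ _ x₄ + t • ((c₁ _ * c₂ x₄ - c₂ _ * c₁ x₄) • y₁) = 0
      rw [← neg_smul, map_smul, map_smul, map_smul, hc₁z, hc₂z, LinearMap.smul_apply, hz]
      simp
    · refine ⟨b (Sum.inl ⟨0, by omega⟩), b (Sum.inl ⟨1, by omega⟩), b (Sum.inl ⟨0, by omega⟩), ?_⟩
      rw [hkey]
      have h1 : c₁ (b (Sum.inl ⟨0, by omega⟩)) = 1 := by
        simp [hc₁def, Module.Basis.coord_apply, Module.Basis.repr_self]
      have h2 : c₂ (b (Sum.inl ⟨0, by omega⟩)) = 0 := by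
        simp [hc₂def, Module.Basis.coord_apply, Module.Basis.repr_self, Finsupp.single_apply, Fin.ext_iff]
      have h3 : c₂ (b (Sum.inl ⟨1, by omega⟩)) = 1 := by
        simp [hc₂def, Module.Basis.coord_apply, Module.Basis.repr_self]
      have h4 : c₁ (b (Sum.inl ⟨1, by omega⟩)) = 0 := by
        simp [hc₁def, Module.Basis.coord_apply, Module.Basis.repr_self, Finsupp.single_apply, Fin.ext_iff]
      rw [h1, h2, h3, h4]
      have hz0 : z ≠ 0 := b.ne_zero _
      simp only [mul_one, mul_zero, zero_mul, sub_zero, one_mul, neg_ne_zero]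
      intro hcon
      rcases smul_eq_zero.mp hcon with h | h
      · exact ht (by simpa using h)
      · exact hz0 h
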